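/- Let φ be an injective ℂ-algebra endomorphism of ℂ[x,y] whose Jacobian determinant D(φ(x), φ(y)) has degree at least 1. Then for every k ≥ 1, the Jacobian determinant D(φ^k(x), φ^k(y)) of the k-th iterate of φ has degree at least k. -/

import Mathlib

open MvPolynomial

/-- `ℂ[x,y]` as multivariate polynomials in two variables. -/
local notation "P" => MvPolynomial (Fin 2) ℂ

/-- The Jacobian determinant `D(u,v) = ∂ₓu·∂ᵧv − ∂ᵧu·∂ₓv`. -/
noncomputable def jacDet (u v : P) : P :=
  pderiv (0 : Fin 2) u * pderiv (1 : Fin 2) v -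
    pderiv (1 : Fin 2) u * pderiv (0 : Fin 2) v

/-- An injective degree function to lexicographic `ℕ × ℕ`. -/
noncomputable def jacDetAuxDD : (Fin 2 →₀ ℕ) → ℕ ×ₗ ℕ := fun m => toLex (m 0 + m 1, m 1)

lemma jacDetAuxDD_add (a b : Fin 2 →₀ ℕ) :
    jacDetAuxDD (a + b) = jacDetAuxDD a + jacDetAuxDD b := by
  simp only [jacDetAuxDD, Finsupp.add_apply, ← toLex_add, Prod.mk_add_mk]
  congr 2
  omega

lemma jacDetAuxDD_inj : Function.Injective jacDetAuxDD := by
  intro a b h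
  have h' := toLex.injective h
  rw [Prod.ext_iff] at h'
  obtain ⟨h1, h2⟩ := h'
  simp only at h1 h2
  ext i
  fin_cases i
  · simpa using (by omega : a 0 = b 0)
  · simpa using h2

lemma jacDetAux_fst_supDegree (p : P) :
    (ofLex (AddMonoidAlgebra.supDegree jacDetAuxDD p)).1 = p.totalDegree := by
  rcases eq_or_ne p 0 with rfl | hp
  · simp [AddMonoidAlgebra.supDegree]
    rfl
  apply le_antisymm
  · obtain ⟨m, hm, he⟩ := AddMonoidAlgebra.exists_supDegree_mem_support jacDetAuxDD hp
    rw [he]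
    have h0 : (ofLex (jacDetAuxDD m)).1 = m 0 + m 1 := rfl
    rw [h0]
    have := MvPolynomial.le_totalDegree (p := p) (s := m) hm
    rwa [Finsupp.sum_fintype _ _ (fun _ => rfl), Fin.sum_univ_two] at this
  · rw [MvPolynomial.totalDegree]
    apply Finset.sup_le
    intro m hm
    have h1 : jacDetAuxDD m ≤ AddMonoidAlgebra.supDegree jacDetAuxDD p := Finset.le_sup hm
    have h2 : (ofLex (jacDetAuxDD m)).1 ≤
        (ofLex (AddMonoidAlgebra.supDegree jacDetAuxDD p)).1 := by
      rcases Prod.Lex.le_iff.1 h1 with h | h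
      · exact h.le
      · exact h.1.le
    calc (m.sum fun _ e => e) = m 0 + m 1 := by
          rw [Finsupp.sum_fintype _ _ (fun _ => rfl), Fin.sum_univ_two]
      _ = (ofLex (jacDetAuxDD m)).1 := rfl
      _ ≤ _ := h2

/-- Total degree is additive on products of nonzero polynomials. -/
lemma jacDetAux_totalDegree_mul {p q : P} (hp : p ≠ 0) (hq : q ≠ 0) :
    (p * q).totalDegree = p.totalDegree + q.totalDegree := by
  have h := AddMonoidAlgebra.supDegree_mul (D := jacDetAuxDD) jacDetAuxDD_inj jacDetAuxDD_add
    (mul_ne_zero ((AddMonoidAlgebra.leadingCoeff_ne_zero jacDetAuxDD_inj).2 hp)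
      ((AddMonoidAlgebra.leadingCoeff_ne_zero jacDetAuxDD_inj).2 hq)) hp hq
  have h2 : (ofLex (AddMonoidAlgebra.supDegree jacDetAuxDD (p * q))).1
      = (ofLex (AddMonoidAlgebra.supDegree jacDetAuxDD p)).1 +
        (ofLex (AddMonoidAlgebra.supDegree jacDetAuxDD q)).1 := by
    rw [h]; rfl
  rwa [jacDetAux_fst_supDegree, jacDetAux_fst_supDegree, jacDetAux_fst_supDegree] at h2

/-- Chain rule for partial derivatives composed with an algebra endomorphism. -/
lemma jacDetAux_chain_rule (ψ : P →ₐ[ℂ] P) (p : P) (i : Fin 2) :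
    pderiv i (ψ p) =
      ψ (pderiv 0 p) * pderiv i (ψ (X 0)) + ψ (pderiv 1 p) * pderiv i (ψ (X 1)) := by
  induction p using MvPolynomial.induction_on with
  | C a => simp [algHom_C]
  | add p q hp hq => simp only [map_add, hp, hq]; ring
  | mul_X p j hp =>
      have hx : ψ (p * X j) = ψ p * ψ (X j) := map_mul ψ _ _
      rw [hx, pderiv_mul, hp]
      fin_cases j <;> simp [Pi.single_apply] <;> ring

/-- Chain rule for the Jacobian determinant. -/
lemma jacDet_comp (ψ : P →ₐ[ℂ] P) (u v : P) :
    jacDet (ψ u) (ψ v) = ψ (jacDet u v) * jacDet (ψ (X 0)) (ψ (X 1)) := by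
  simp only [jacDet, jacDetAux_chain_rule ψ u, jacDetAux_chain_rule ψ v, map_sub, map_mul]
  ring

lemma jacDetAux_pow_inj (φ : P →ₐ[ℂ] P) (h : Function.Injective φ) (n : ℕ) :
    Function.Injective ⇑(φ ^ n : P →ₐ[ℂ] P) := by
  induction n with
  | zero =>
    intro a b hab
    rw [pow_zero] at hab
    simpa using hab
  | succ m ih =>
    intro a b hab
    rw [pow_succ, AlgHom.mul_apply, AlgHom.mul_apply] at hab
    exact h (ih hab)

lemma jacDetAux_eq_C_of_totalDegree_eq_zero {p : P} (hd : p.totalDegree = 0) :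
    p = C (coeff 0 p) := by
  have hsupp := (totalDegree_eq_zero_iff _ p).1 hd
  ext m
  rcases eq_or_ne m 0 with rfl | hm
  · simp
  · have hns : m ∉ p.support := fun h => hm (Finsupp.ext fun x => hsupp m h x)
    rw [notMem_support_iff] at hns
    rw [hns, coeff_C, if_neg (Ne.symm hm)]

/-- An injective endomorphism sends nonconstant polynomials to nonconstant ones. -/
lemma jacDetAux_degree_pos (ψ : P →ₐ[ℂ] P) (hinj : Function.Injective ψ) {p : P}
    (hp : 1 ≤ p.totalDegree) : 1 ≤ (ψ p).totalDegree := by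
  by_contra h
  push_neg at h
  have hd : (ψ p).totalDegree = 0 := by omega
  have hc : ψ p = C (coeff 0 (ψ p)) := jacDetAux_eq_C_of_totalDegree_eq_zero hd
  have : ψ p = ψ (C (coeff 0 (ψ p))) := by rw [algHom_C]; exact hc
  have hpc := hinj this
  rw [hpc] at hp
  simp [MvPolynomial.totalDegree_C] at hp

/-- Let `φ` be an injective `ℂ`-algebra endomorphism of `ℂ[x,y]` whose Jacobian
determinant has degree at least 1.  Then for every `k ≥ 1` the Jacobian
determinant of `φ^k` has degree at least `k`. -/
theorem jacDet_degree_of_iterate (φ : P →ₐ[ℂ] P)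
    (hinj : Function.Injective φ)
    (hdeg : 1 ≤ (jacDet (φ (X 0)) (φ (X 1))).totalDegree) :
    ∀ k : ℕ, 1 ≤ k →
      k ≤ (jacDet ((φ ^ k : P →ₐ[ℂ] P) (X 0)) ((φ ^ k : P →ₐ[ℂ] P) (X 1))).totalDegree := by
  intro k hk
  induction k with
  | zero => omega
  | succ n ih =>
    rcases Nat.eq_or_lt_of_le hk with h1 | h1
    · -- n + 1 = 1
      have hn : n = 0 := by omega
      subst hn
      simpa [pow_one] using hdeg
    · -- n ≥ 1
      have hn : 1 ≤ n := by omega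
      have ihn := ih hn
      -- injectivity of φ^n
      have hinjn : Function.Injective ⇑(φ ^ n : P →ₐ[ℂ] P) :=
        jacDetAux_pow_inj φ hinj n
      -- rewrite φ^(n+1) (X i) = φ^n (φ (X i))
      have hx : ∀ i : Fin 2, (φ ^ (n + 1) : P →ₐ[ℂ] P) (X i)
          = (φ ^ n : P →ₐ[ℂ] P) (φ (X i)) := by
        intro i
        rw [pow_succ]
        rfl
      rw [hx 0, hx 1,
        jacDet_comp (φ ^ n : P →ₐ[ℂ] P) (φ (X 0)) (φ (X 1))]
      set ψ := (φ ^ n : P →ₐ[ℂ] P)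
      have hJ : 1 ≤ (ψ (jacDet (φ (X 0)) (φ (X 1)))).totalDegree :=
        jacDetAux_degree_pos ψ hinjn hdeg
      have hJne : ψ (jacDet (φ (X 0)) (φ (X 1))) ≠ 0 := by
        intro h0
        rw [h0] at hJ
        simp at hJ
      have hDne : jacDet (ψ (X 0)) (ψ (X 1)) ≠ 0 := by
        intro h0
        rw [h0] at ihn
        simp at ihn
        omega
      rw [jacDetAux_totalDegree_mul hJne hDne]
      omega
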